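/- Let (Y, d) be a metric space and (x_n) a sequence contained in a compact subset C of Y with d(x_n, x_{n+1}) → 0. Then the set of cluster points of (x_n) is a nonempty compact connected subset of C. -/

import Mathlib

open Filter Topology Metric

theorem cluster_set_connected_of_asymptotically_regular {Y : Type*} [MetricSpace Y]
    (C : Set Y) (hC : IsCompact C)
    (x : ℕ → Y) (hx : ∀ n, x n ∈ C)
    (hreg : Tendsto (fun n => dist (x n) (x (n + 1))) atTop (𝓝 0)) :
    let S := {p : Y | ∃ φ : ℕ → ℕ, StrictMono φ ∧ Tendsto (x ∘ φ) atTop (𝓝 p)}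
    S.Nonempty ∧ IsCompact S ∧ IsConnected S ∧ S ⊆ C := by
  intro S
  have hSdef : ∀ p, p ∈ S ↔ MapClusterPt p atTop x := by
    intro p
    constructor
    · rintro ⟨φ, hφ, hlim⟩
      exact hlim.mapClusterPt.of_comp hφ.tendsto_atTop
    · exact fun h => TopologicalSpace.FirstCountableTopology.tendsto_subseq h
  have hSeq : S = {p | ClusterPt p (Filter.map x atTop)} := Set.ext hSdef
  have hclosed : IsClosed S := hSeq ▸ isClosed_setOf_clusterPt
  have hsub : S ⊆ C := by
    rintro p ⟨φ, hφ, hlim⟩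
    exact hC.isClosed.mem_of_tendsto hlim (Eventually.of_forall fun n => hx _)
  have hcomp : IsCompact S := hC.of_isClosed_subset hclosed hsub
  have hne : S.Nonempty := by
    obtain ⟨a, _, φ, hφ, h⟩ := hC.tendsto_subseq hx
    exact ⟨a, φ, hφ, h⟩
  refine ⟨hne, hcomp, ⟨hne, ?_⟩, hsub⟩
  rw [isPreconnected_iff_subset_of_fully_disjoint_closed hclosed]
  intro u v hu hv hcover hdisj
  by_contra hcon
  push_neg at hcon
  obtain ⟨hnu, hnv⟩ := hcon
  set A := S ∩ u with hA
  set B := S ∩ v with hB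
  have hAne : A.Nonempty := by
    obtain ⟨p, hpS, hpv⟩ := Set.not_subset.mp hnv
    exact ⟨p, hpS, (hcover hpS).resolve_right hpv⟩
  have hBne : B.Nonempty := by
    obtain ⟨p, hpS, hpu⟩ := Set.not_subset.mp hnu
    exact ⟨p, hpS, (hcover hpS).resolve_left hpu⟩
  have hABdisj : Disjoint A B := (hdisj.mono (Set.inter_subset_right) (Set.inter_subset_right))
  have hAclosed : IsClosed A := hclosed.inter hu
  have hBclosed : IsClosed B := hclosed.inter hv
  have hAcomp : IsCompact A := hcomp.of_isClosed_subset hAclosed Set.inter_subset_left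
  -- gap between A and B
  obtain ⟨a₀, ha₀A, ha₀min⟩ := hAcomp.exists_isMinOn hAne (continuous_infDist_pt B).continuousOn
  set ε := infDist a₀ B with hε
  have hεpos : 0 < ε := by
    refine (hBclosed.notMem_iff_infDist_pos hBne).mp ?_
    exact fun h => (hABdisj.ne_of_mem ha₀A h) rfl
  have hgap : ∀ a ∈ A, ∀ b ∈ B, ε ≤ dist a b :=
    fun a ha b hb => (ha₀min ha).trans (infDist_le_dist_of_mem hb)
  set ε3 := ε / 3 with hε3
  have hε3pos : 0 < ε3 := by positivity
  -- eventually small steps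
  obtain ⟨N₀, hN₀⟩ := eventually_atTop.mp (hreg.eventually (gt_mem_nhds hε3pos))
  obtain ⟨a, haS, hau⟩ := id hAne
  obtain ⟨b, hbS, hbv⟩ := id hBne
  have freqA : ∃ᶠ n in atTop, x n ∈ ball a ε3 :=
    mapClusterPt_iff_frequently.mp ((hSdef a).mp haS) _ (ball_mem_nhds a hε3pos)
  have freqB : ∃ᶠ n in atTop, x n ∈ ball b ε3 :=
    mapClusterPt_iff_frequently.mp ((hSdef b).mp hbS) _ (ball_mem_nhds b hε3pos)
  -- key: frequently far from both A and B
  have key : ∃ᶠ n in atTop, ε3 ≤ infDist (x n) A ∧ ε3 ≤ infDist (x n) B := by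
    rw [frequently_atTop]
    intro N
    obtain ⟨n, hnM, hn⟩ := frequently_atTop.mp freqA (max N N₀)
    obtain ⟨m, hm, hmB⟩ := frequently_atTop.mp freqB (n + 1)
    have hPn : infDist (x n) A < ε3 :=
      lt_of_le_of_lt (infDist_le_dist_of_mem ⟨haS, hau⟩) (mem_ball.mp hn)
    have notboth : ∀ k, infDist (x k) B < ε3 → ¬ infDist (x k) A < 2 * ε3 := by
      intro k hkB hkA
      obtain ⟨a', ha', hda'⟩ := (infDist_lt_iff hAne).mp hkA
      obtain ⟨b', hb', hdb'⟩ := (infDist_lt_iff hBne).mp hkB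
      have := hgap a' ha' b' hb'
      have : dist a' b' ≤ dist a' (x k) + dist (x k) b' := dist_triangle _ _ _
      rw [dist_comm a' (x k)] at this
      linarith [hgap a' ha' b' hb']
    have hPm : ¬ infDist (x m) A < ε3 := by
      intro h
      exact notboth m (lt_of_le_of_lt (infDist_le_dist_of_mem ⟨hbS, hbv⟩) (mem_ball.mp hmB))
        (by linarith)
    have hex : ∃ j, n < j ∧ ¬ infDist (x j) A < ε3 := ⟨m, by omega, hPm⟩
    set k := Nat.find hex with hkdef
    obtain ⟨hkgt, hkfar⟩ := Nat.find_spec hex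
    have hk1lt : infDist (x (k - 1)) A < ε3 := by
      rcases eq_or_lt_of_le (Nat.succ_le_of_lt hkgt) with heq | hlt
      · have : k - 1 = n := by omega
        rw [this]; exact hPn
      · have h1 : k - 1 < k := by omega
        have := Nat.find_min hex h1
        push_neg at this
        exact this (by omega)
    have hstep : dist (x (k - 1)) (x k) < ε3 := by
      have h1 : k - 1 + 1 = k := by omega
      have := hN₀ (k - 1) (by omega)
      rwa [h1] at this
    have hkA2 : infDist (x k) A < 2 * ε3 :=
      calc infDist (x k) A ≤ infDist (x (k - 1)) A + dist (x k) (x (k - 1)) :=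
            infDist_le_infDist_add_dist
        _ < ε3 + ε3 := by rw [dist_comm]; exact add_lt_add hk1lt hstep
        _ = 2 * ε3 := by ring
    refine ⟨k, by omega, not_lt.mp hkfar, not_lt.mp fun hkB => notboth k hkB hkA2⟩
  obtain ⟨ψ, hψmono, hψ⟩ := extraction_of_frequently_atTop key
  obtain ⟨p, _, φ, hφmono, hplim⟩ := hC.tendsto_subseq (x := x ∘ ψ) (fun n => hx _)
  have hpS : p ∈ S := ⟨ψ ∘ φ, hψmono.comp hφmono, hplim⟩
  have hpA : ε3 ≤ infDist p A :=
    ge_of_tendsto (((continuous_infDist_pt A).tendsto p).comp hplim)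
      (Eventually.of_forall fun n => (hψ (φ n)).1)
  have hpB : ε3 ≤ infDist p B :=
    ge_of_tendsto (((continuous_infDist_pt B).tendsto p).comp hplim)
      (Eventually.of_forall fun n => (hψ (φ n)).2)
  rcases hcover hpS with hpu | hpv
  · have : infDist p A = 0 := infDist_zero_of_mem ⟨hpS, hpu⟩
    linarith
  · have : infDist p B = 0 := infDist_zero_of_mem ⟨hpS, hpv⟩
    linarith
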